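/- For any C^4 functions ζ, η : ℝ^N → ℝ, the pointwise identity Δζ · Δ(ζη²) = [Δ(ζη)]² − 4(∇ζ·∇η)² − ζ²|Δη|² + 2ζΔζ|∇η|² − 4ζΔη(∇ζ·∇η) holds at every point of ℝ^N. -/

import Mathlib

open MeasureTheory

/-- The Euclidean Laplacian of `f : ℝ^N → ℝ`, as the sum of second partial derivatives. -/
noncomputable def lap {N : ℕ} (f : EuclideanSpace ℝ (Fin N) → ℝ)
    (x : EuclideanSpace ℝ (Fin N)) : ℝ :=
  ∑ i : Fin N,
    fderiv ℝ (fun y => fderiv ℝ f y (EuclideanSpace.single i 1)) x (EuclideanSpace.single i 1)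

lemma grad_apply {N : ℕ} (f : EuclideanSpace ℝ (Fin N) → ℝ) (x v : EuclideanSpace ℝ (Fin N)) :
    (inner ℝ (gradient f x) v : ℝ) = fderiv ℝ f x v := by
  rw [gradient, InnerProductSpace.toDual_symm_apply]

lemma inner_grad_eq {N : ℕ} (f g : EuclideanSpace ℝ (Fin N) → ℝ) (x : EuclideanSpace ℝ (Fin N)) :
    (inner ℝ (gradient f x) (gradient g x) : ℝ)
      = ∑ i : Fin N, fderiv ℝ f x (EuclideanSpace.single i 1) *
          fderiv ℝ g x (EuclideanSpace.single i 1) := by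
  have : (inner ℝ (gradient f x) (gradient g x) : ℝ)
      = ∑ i : Fin N, gradient f x i * gradient g x i := by
    simp only [PiLp.inner_apply, RCLike.inner_apply, conj_trivial]
    exact Finset.sum_congr rfl fun i _ => by ring
  rw [this]
  refine Finset.sum_congr rfl fun i _ => ?_
  have h1 : gradient f x i = (inner ℝ (gradient f x) (EuclideanSpace.single i 1) : ℝ) := by
    rw [EuclideanSpace.inner_single_right]; simp
  have h2 : gradient g x i = (inner ℝ (gradient g x) (EuclideanSpace.single i 1) : ℝ) := by
    rw [EuclideanSpace.inner_single_right]; simp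
  rw [h1, h2, grad_apply, grad_apply]

lemma lap_mul {N : ℕ} (f g : EuclideanSpace ℝ (Fin N) → ℝ)
    (hf : ContDiff ℝ 2 f) (hg : ContDiff ℝ 2 g) (x : EuclideanSpace ℝ (Fin N)) :
    lap (fun y => f y * g y) x
      = f x * lap g x + g x * lap f x
        + 2 * (inner ℝ (gradient f x) (gradient g x) : ℝ) := by
  have hf1 : Differentiable ℝ f := hf.differentiable (by norm_num)
  have hg1 : Differentiable ℝ g := hg.differentiable (by norm_num)
  have hDf : ∀ i : Fin N, Differentiable ℝ
      (fun y => fderiv ℝ f y (EuclideanSpace.single i 1)) := by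
    intro i
    exact (ContinuousLinearMap.apply ℝ ℝ (EuclideanSpace.single i 1)).differentiable.comp
      ((hf.fderiv_right (m := 1) le_rfl).differentiable one_ne_zero)
  have hDg : ∀ i : Fin N, Differentiable ℝ
      (fun y => fderiv ℝ g y (EuclideanSpace.single i 1)) := by
    intro i
    exact (ContinuousLinearMap.apply ℝ ℝ (EuclideanSpace.single i 1)).differentiable.comp
      ((hg.fderiv_right (m := 1) le_rfl).differentiable one_ne_zero)
  have key : ∀ i : Fin N,
      fderiv ℝ (fun y => fderiv ℝ (fun z => f z * g z) y (EuclideanSpace.single i 1)) x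
          (EuclideanSpace.single i 1)
        = f x * fderiv ℝ (fun y => fderiv ℝ g y (EuclideanSpace.single i 1)) x
              (EuclideanSpace.single i 1)
          + g x * fderiv ℝ (fun y => fderiv ℝ f y (EuclideanSpace.single i 1)) x
              (EuclideanSpace.single i 1)
          + 2 * (fderiv ℝ f x (EuclideanSpace.single i 1)
              * fderiv ℝ g x (EuclideanSpace.single i 1)) := by
    intro i
    have hfun : (fun y => fderiv ℝ (fun z => f z * g z) y (EuclideanSpace.single i 1))
        = fun y => f y * fderiv ℝ g y (EuclideanSpace.single i 1)
            + g y * fderiv ℝ f y (EuclideanSpace.single i 1) := by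
      funext y
      rw [fderiv_fun_mul (hf1 y) (hg1 y)]
      simp
    rw [hfun]
    have h1 : HasFDerivAt
        (fun y => f y * fderiv ℝ g y (EuclideanSpace.single i 1)
            + g y * fderiv ℝ f y (EuclideanSpace.single i 1))
        ((f x • fderiv ℝ (fun y => fderiv ℝ g y (EuclideanSpace.single i 1)) x
            + fderiv ℝ g x (EuclideanSpace.single i 1) • fderiv ℝ f x)
          + (g x • fderiv ℝ (fun y => fderiv ℝ f y (EuclideanSpace.single i 1)) x
            + fderiv ℝ f x (EuclideanSpace.single i 1) • fderiv ℝ g x)) x := by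
      exact (((hf1 x).hasFDerivAt.mul ((hDg i) x).hasFDerivAt).add
        (((hg1 x).hasFDerivAt.mul ((hDf i) x).hasFDerivAt)))
    rw [h1.fderiv]
    simp [ContinuousLinearMap.add_apply, ContinuousLinearMap.smul_apply]
    ring
  unfold lap
  rw [Finset.sum_congr rfl (fun i _ => key i)]
  rw [Finset.sum_add_distrib, Finset.sum_add_distrib, ← Finset.mul_sum, ← Finset.mul_sum,
    ← Finset.mul_sum, inner_grad_eq]

/-- For `C⁴` functions `ζ, η`, the pointwise identity
`Δζ · Δ(ζη²) = [Δ(ζη)]² − 4(∇ζ·∇η)² − ζ²|Δη|² + 2ζΔζ|∇η|² − 4ζΔη(∇ζ·∇η)`. -/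
theorem stmt0 {N : ℕ} (ζ η : EuclideanSpace ℝ (Fin N) → ℝ)
    (hζ : ContDiff ℝ 4 ζ) (hη : ContDiff ℝ 4 η) (x : EuclideanSpace ℝ (Fin N)) :
    lap ζ x * lap (fun y => ζ y * (η y) ^ 2) x =
      (lap (fun y => ζ y * η y) x) ^ 2
        - 4 * (inner ℝ (gradient ζ x) (gradient η x) : ℝ) ^ 2
        - (ζ x) ^ 2 * (lap η x) ^ 2
        + 2 * ζ x * lap ζ x * ‖gradient η x‖ ^ 2
        - 4 * ζ x * lap η x * (inner ℝ (gradient ζ x) (gradient η x) : ℝ) := by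
  have hζ2 : ContDiff ℝ 2 ζ := hζ.of_le (by norm_num)
  have hη2 : ContDiff ℝ 2 η := hη.of_le (by norm_num)
  have hζη2 : ContDiff ℝ 2 (fun y => ζ y * η y) := hζ2.mul hη2
  have h0 : (fun y => ζ y * (η y) ^ 2) = fun y => (ζ y * η y) * η y := by
    funext y; ring
  have h1 := lap_mul (fun y => ζ y * η y) η hζη2 hη2 x
  have h2 := lap_mul ζ η hζ2 hη2 x
  -- gradient product rule in inner-product form
  have h3 : (inner ℝ (gradient (fun y => ζ y * η y) x) (gradient η x) : ℝ)
      = ζ x * (inner ℝ (gradient η x) (gradient η x) : ℝ)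
        + η x * (inner ℝ (gradient ζ x) (gradient η x) : ℝ) := by
    rw [grad_apply, grad_apply, grad_apply,
      fderiv_fun_mul (hζ2.differentiable (by norm_num) x) (hη2.differentiable (by norm_num) x)]
    simp
  have h4 : ‖gradient η x‖ ^ 2 = (inner ℝ (gradient η x) (gradient η x) : ℝ) :=
    (real_inner_self_eq_norm_sq _).symm
  rw [h0, h1, h2, h3, h4]
  ring
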